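/- arXiv:1805.07474 — 4 statements merged into one kernel-verified Lean document; each statement's English description precedes it below -/
import Mathlib

section
/- For every real t ≥ 3, 3(1 + 1/t)^(2/5) - 2(1 + 1/t)^(1/5) - (8/5) t^(-3/5) ≥ 0. -/
theorem stmt_1 (t : ℝ) (ht : 3 ≤ t) :
    3 * (1 + 1/t) ^ ((2:ℝ)/5) - 2 * (1 + 1/t) ^ ((1:ℝ)/5)
      - (8/5) * t ^ (-(3:ℝ)/5) ≥ 0 := by
  have ht0 : (0:ℝ) < t := by linarith
  have hb : (1:ℝ) ≤ 1 + 1/t := by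
    have : 0 < 1/t := by positivity
    linarith
  set x := (1 + 1/t) ^ ((1:ℝ)/5) with hx
  have hx1 : 1 ≤ x := Real.one_le_rpow hb (by norm_num)
  have h2 : (1 + 1/t) ^ ((2:ℝ)/5) = x ^ 2 := by
    rw [hx, ← Real.rpow_natCast ((1 + 1/t) ^ ((1:ℝ)/5)) 2,
      ← Real.rpow_mul (by linarith)]
    norm_num
  have hypos : 0 < t ^ ((3:ℝ)/5) := Real.rpow_pos_of_pos ht0 _
  have hy5 : (t ^ ((3:ℝ)/5)) ^ (5:ℕ) = t ^ (3:ℕ) := by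
    rw [← Real.rpow_natCast (t ^ ((3:ℝ)/5)) 5, ← Real.rpow_mul ht0.le,
      ← Real.rpow_natCast t 3]
    norm_num
  have h85 : (8/5:ℝ) ≤ t ^ ((3:ℝ)/5) := by
    by_contra h
    push_neg at h
    have h1 : (t ^ ((3:ℝ)/5)) ^ (5:ℕ) ≤ (8/5:ℝ) ^ (5:ℕ) :=
      pow_le_pow_left₀ hypos.le h.le 5
    have h2 : (27:ℝ) ≤ t ^ (3:ℕ) := by nlinarith [sq_nonneg (t - 3), sq_nonneg (t + 3)]
    rw [hy5] at h1
    norm_num at h1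
    linarith
  have hy : t ^ (-(3:ℝ)/5) ≤ 5/8 := by
    rw [show -(3:ℝ)/5 = -((3:ℝ)/5) by ring, Real.rpow_neg ht0.le]
    rw [inv_le_comm₀ (by positivity) (by norm_num)]
    linarith
  rw [h2]
  nlinarith [hx1, hy]
end

section
/- For every natural number t ≥ 1, with σ_s := s^(-2/5), one has (2σ_{t+1} - 2σ_t + (3/2)σ_t²) / √(2 σ_{t+1}) ≥ (1/√2) t^(-3/5). -/
lemma poly_aux (u : ℝ) (hu : 1 ≤ u) :
    (4*u^2-1)^5 * (u^5+1)^2 ≤ 1024*u^20 := by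
  have h : (0:ℝ) ≤ u - 1 := by linarith
  nlinarith [pow_nonneg h 2, pow_nonneg h 3, pow_nonneg h 4, pow_nonneg h 5,
    pow_nonneg h 6, pow_nonneg h 7, pow_nonneg h 8, pow_nonneg h 9,
    pow_nonneg h 10, pow_nonneg h 11, pow_nonneg h 12, pow_nonneg h 13,
    pow_nonneg h 14, pow_nonneg h 15, pow_nonneg h 16, pow_nonneg h 17,
    pow_nonneg h 18]

lemma key_aux (x : ℝ) (hx : 1 ≤ x) :
    x ^ (-(2:ℝ)/5) - (1/4) * x ^ (-(4:ℝ)/5) ≤ (x+1) ^ (-(2:ℝ)/5) := by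
  have hx0 : (0:ℝ) < x := by linarith
  set u := x ^ ((1:ℝ)/5) with hu_def
  have hu0 : 0 < u := Real.rpow_pos_of_pos hx0 _
  have hu1 : 1 ≤ u := Real.one_le_rpow hx (by norm_num)
  have hu5 : u ^ 5 = x := by
    rw [hu_def, ← Real.rpow_natCast (x ^ ((1:ℝ)/5)) 5, ← Real.rpow_mul hx0.le]
    norm_num
  have h2 : x ^ (-(2:ℝ)/5) = 1 / u ^ 2 := by
    rw [← hu5, ← Real.rpow_natCast u 5, ← Real.rpow_mul hu0.le]
    rw [show ((5:ℕ):ℝ) * (-(2:ℝ)/5) = -(2:ℕ) by push_cast; ring,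
      Real.rpow_neg hu0.le, Real.rpow_natCast, one_div]
  have h4 : x ^ (-(4:ℝ)/5) = 1 / u ^ 4 := by
    rw [← hu5, ← Real.rpow_natCast u 5, ← Real.rpow_mul hu0.le]
    rw [show ((5:ℕ):ℝ) * (-(4:ℝ)/5) = -(4:ℕ) by push_cast; ring,
      Real.rpow_neg hu0.le, Real.rpow_natCast, one_div]
  set A := (x+1) ^ (-(2:ℝ)/5) with hA_def
  have hA0 : 0 < A := Real.rpow_pos_of_pos (by linarith) _
  have hA5 : A ^ 5 = 1 / (u^5+1) ^ 2 := by
    rw [hA_def, ← Real.rpow_natCast ((x+1) ^ (-(2:ℝ)/5)) 5, ← Real.rpow_mul (by linarith : (0:ℝ) ≤ x+1)]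
    rw [show (-(2:ℝ)/5) * ((5:ℕ):ℝ) = -(2:ℕ) by push_cast; ring,
      Real.rpow_neg (by linarith : (0:ℝ) ≤ x+1), Real.rpow_natCast, one_div, hu5]
  rw [h2, h4]
  have hB : 1 / u ^ 2 - 1/4 * (1 / u ^ 4) = (4*u^2-1) / (4*u^4) := by
    field_simp
  rw [hB]
  have hu4 : (0:ℝ) < 4 * u ^ 4 := by positivity
  refine le_of_pow_le_pow_left₀ (n := 5) (by norm_num) hA0.le ?_
  rw [hA5, div_pow]
  rw [div_le_div_iff₀ (by positivity) (by positivity)]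
  have := poly_aux u hu1
  calc (4*u^2-1)^5 * (u^5+1)^2 ≤ 1024 * u^20 := poly_aux u hu1
    _ = 1 * (4*u^4)^5 := by ring

theorem stmt_3 (t : ℕ) (ht : 1 ≤ t)
    (σ : ℕ → ℝ) (hσ : ∀ s : ℕ, σ s = (s : ℝ) ^ (-(2:ℝ)/5)) :
    (2 * σ (t+1) - 2 * σ t + (3/2) * (σ t)^2) / Real.sqrt (2 * σ (t+1))
      ≥ (1 / Real.sqrt 2) * (t : ℝ) ^ (-(3:ℝ)/5) := by
  have hx : (1:ℝ) ≤ (t:ℝ) := by exact_mod_cast ht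
  set x : ℝ := (t:ℝ) with hx_def
  have hx0 : (0:ℝ) < x := by linarith
  have hcast : ((t+1:ℕ):ℝ) = x + 1 := by push_cast; ring
  rw [hσ t, hσ (t+1), hcast]
  have hx10 : (0:ℝ) < x + 1 := by linarith
  -- denominator simplification
  have hden : Real.sqrt (2 * (x+1) ^ (-(2:ℝ)/5)) = Real.sqrt 2 * (x+1) ^ (-(1:ℝ)/5) := by
    rw [Real.sqrt_mul (by norm_num : (0:ℝ) ≤ 2)]
    congr 1
    rw [Real.sqrt_eq_rpow, ← Real.rpow_mul hx10.le]
    norm_num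
  rw [hden, ge_iff_le, le_div_iff₀ (by positivity)]
  have hs2 : Real.sqrt 2 ≠ 0 := by positivity
  have hLHS : 1 / Real.sqrt 2 * x ^ (-(3:ℝ)/5) * (Real.sqrt 2 * (x+1) ^ (-(1:ℝ)/5))
      = x ^ (-(3:ℝ)/5) * (x+1) ^ (-(1:ℝ)/5) := by
    field_simp
  rw [hLHS]
  -- (x+1)^(-1/5) ≤ x^(-1/5)
  have hmono : (x+1) ^ (-(1:ℝ)/5) ≤ x ^ (-(1:ℝ)/5) := by
    apply Real.rpow_le_rpow_of_nonpos hx0 (by linarith) (by norm_num)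
  have hpos3 : (0:ℝ) < x ^ (-(3:ℝ)/5) := Real.rpow_pos_of_pos hx0 _
  have hstep1 : x ^ (-(3:ℝ)/5) * (x+1) ^ (-(1:ℝ)/5) ≤ x ^ (-(4:ℝ)/5) := by
    calc x ^ (-(3:ℝ)/5) * (x+1) ^ (-(1:ℝ)/5) ≤ x ^ (-(3:ℝ)/5) * x ^ (-(1:ℝ)/5) := by
          exact mul_le_mul_of_nonneg_left hmono hpos3.le
      _ = x ^ (-(4:ℝ)/5) := by
          rw [← Real.rpow_add hx0]; norm_num
  have hsq : (x ^ (-(2:ℝ)/5))^2 = x ^ (-(4:ℝ)/5) := by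
    rw [← Real.rpow_natCast (x ^ (-(2:ℝ)/5)) 2, ← Real.rpow_mul hx0.le]
    norm_num
  have hkey := key_aux x hx
  rw [hsq]
  linarith
end

section
/- Let K ⊆ ℝ^n be a compact convex set, η > 0, x₁ ∈ K, g₁,…,g_T ∈ ℝ^n, and define F_t(x) = η ∑_{τ=1}^{t-1} gᵀ_τ x + ‖x - x₁‖². Let x*_t be a minimizer of F_t over K. Then for every t, g_tᵀ (x*_t - x*_{t+1}) ≤ 2η ‖g_t‖². -/
set_option maxHeartbeats 1000000 in
theorem stmt_9 (n T : ℕ) (K : Set (EuclideanSpace ℝ (Fin n)))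
    (hKc : IsCompact K) (hK : Convex ℝ K)
    (η : ℝ) (hη : 0 < η) (x₁ : EuclideanSpace ℝ (Fin n)) (hx₁ : x₁ ∈ K)
    (g : ℕ → EuclideanSpace ℝ (Fin n))
    (F : ℕ → EuclideanSpace ℝ (Fin n) → ℝ)
    (hF : ∀ t, ∀ x, F t x =
      η * ∑ τ ∈ Finset.Icc 1 (t - 1), (inner ℝ (g τ) x : ℝ) + ‖x - x₁‖ ^ 2)
    (xs : ℕ → EuclideanSpace ℝ (Fin n))
    (hxs : ∀ t, xs t ∈ K ∧ ∀ y ∈ K, F t (xs t) ≤ F t y) :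
    ∀ t ∈ Finset.Icc 1 T, (inner ℝ (g t) (xs t - xs (t + 1)) : ℝ) ≤ 2 * η * ‖g t‖ ^ 2 := by
  have strong : ∀ s : Finset ℕ, ∀ a b : EuclideanSpace ℝ (Fin n), a ∈ K → b ∈ K →
      (∀ y ∈ K, (η * ∑ τ ∈ s, (inner ℝ (g τ) a : ℝ) + ‖a - x₁‖ ^ 2) ≤
        η * ∑ τ ∈ s, (inner ℝ (g τ) y : ℝ) + ‖y - x₁‖ ^ 2) →
      η * ∑ τ ∈ s, (inner ℝ (g τ) a : ℝ) + ‖a - x₁‖ ^ 2 + ‖a - b‖ ^ 2 / 2 ≤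
        η * ∑ τ ∈ s, (inner ℝ (g τ) b : ℝ) + ‖b - x₁‖ ^ 2 := by
    intro s a b ha hb hmin
    set m : EuclideanSpace ℝ (Fin n) := (2:ℝ)⁻¹ • (a + b) with hmdef
    have hm : m ∈ K := by
      have := hK ha hb (by norm_num : (0:ℝ) ≤ 2⁻¹) (by norm_num : (0:ℝ) ≤ 2⁻¹) (by norm_num)
      simpa [hmdef, smul_add] using this
    have hmin' := hmin m hm
    have hsum : ∑ τ ∈ s, (inner ℝ (g τ) m : ℝ) =
        (2:ℝ)⁻¹ * (∑ τ ∈ s, (inner ℝ (g τ) a : ℝ) + ∑ τ ∈ s, (inner ℝ (g τ) b : ℝ)) := by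
      rw [mul_add, Finset.mul_sum, Finset.mul_sum, ← Finset.sum_add_distrib]
      refine Finset.sum_congr rfl fun τ _ => ?_
      simp [hmdef, inner_smul_right, inner_add_right, mul_add]
    have hmx : m - x₁ = (2:ℝ)⁻¹ • ((a - x₁) + (b - x₁)) := by
      rw [hmdef]; module
    have hab : a - b = (a - x₁) - (b - x₁) := by abel
    have hn1 := norm_add_sq_real (a - x₁) (b - x₁)
    have hn2 := norm_sub_sq_real (a - x₁) (b - x₁)
    have hn2' : ‖a - b‖ ^ 2 =
        ‖a - x₁‖ ^ 2 - 2 * (inner ℝ (a - x₁) (b - x₁) : ℝ) + ‖b - x₁‖ ^ 2 := by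
      rw [hab]; exact hn2
    have hnorm : ‖m - x₁‖ ^ 2 = (‖a - x₁‖ ^ 2 + ‖b - x₁‖ ^ 2) / 2 - ‖a - b‖ ^ 2 / 4 := by
      rw [hmx, norm_smul, mul_pow]
      norm_num
      nlinarith [hn1, hn2']
    rw [hsum, hnorm] at hmin'
    nlinarith [hmin']
  intro t ht
  obtain ⟨ht1, -⟩ := Finset.mem_Icc.mp ht
  obtain ⟨s, rfl⟩ : ∃ s, t = s + 1 := ⟨t - 1, (Nat.succ_pred_eq_of_pos ht1).symm⟩
  set a := xs (s + 1) with hadef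
  set b := xs (s + 2) with hbdef
  have ha := (hxs (s + 1)).1
  have hb := (hxs (s + 2)).1
  have hmin1 := (hxs (s + 1)).2
  have hmin2 := (hxs (s + 2)).2
  have I1 := strong (Finset.Icc 1 s) a b ha hb (fun y hy => by
    have := hmin1 y hy
    rw [hF, hF] at this
    simpa [Nat.add_sub_cancel] using this)
  have I2 := strong (Finset.Icc 1 (s + 1)) b a hb ha (fun y hy => by
    have := hmin2 y hy
    rw [hF, hF] at this
    simpa [Nat.add_sub_cancel] using this)
  have hsplit : ∀ x : EuclideanSpace ℝ (Fin n),
      ∑ τ ∈ Finset.Icc 1 (s + 1), (inner ℝ (g τ) x : ℝ) =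
      ∑ τ ∈ Finset.Icc 1 s, (inner ℝ (g τ) x : ℝ) + (inner ℝ (g (s + 1)) x : ℝ) :=
    fun x => Finset.sum_Icc_succ_top (Nat.le_add_left 1 s) _
  rw [hsplit a, hsplit b] at I2
  have hrev : ‖b - a‖ = ‖a - b‖ := norm_sub_rev _ _
  rw [hrev] at I2
  have hkey : ‖a - b‖ ^ 2 ≤ η * (inner ℝ (g (s + 1)) (a - b) : ℝ) := by
    rw [inner_sub_right]
    nlinarith [I1, I2]
  have hc : (inner ℝ (g (s + 1)) (a - b) : ℝ) ≤ ‖g (s + 1)‖ * ‖a - b‖ :=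
    real_inner_le_norm _ _
  nlinarith [hkey, hc, sq_nonneg (‖a - b‖ - η * ‖g (s + 1)‖), norm_nonneg (a - b),
    norm_nonneg (g (s + 1)), hη]
end

section
/- Let f : ℝ^n → ℝ be continuously differentiable and δ > 0. Then the gradient of the δ-smoothed function f̂_δ(x) = E_{v∼B^n}[f(x + δv)] satisfies ∇f̂_δ(x) = E_{u∼S^n}[(n/δ) f(x + δu) u], where u is uniform on the unit sphere. -/
open MeasureTheory Measure Metric Set Filter Asymptotics
open scoped Topology RealInnerProductSpace NNReal ENNReal

noncomputable section

namespace Aux14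

/-! ### A C¹ monotone transition function -/

def clamp (s : ℝ) : ℝ := min 1 (max 0 s)

lemma clamp_nonneg (s : ℝ) : 0 ≤ clamp s := le_min one_pos.le (le_max_left 0 s)

lemma clamp_le_one (s : ℝ) : clamp s ≤ 1 := min_le_left _ _

lemma clamp_of_nonpos {s : ℝ} (h : s ≤ 0) : clamp s = 0 := by
  simp [clamp, max_eq_left h]

lemma clamp_of_one_le {s : ℝ} (h : 1 ≤ s) : clamp s = 1 := by
  have : (0:ℝ) ≤ s := le_trans zero_le_one h
  simp [clamp, max_eq_right this, min_eq_left h]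

lemma clamp_of_mem {s : ℝ} (h0 : 0 ≤ s) (h1 : s ≤ 1) : clamp s = s := by
  simp [clamp, max_eq_right h0, min_eq_right h1]

lemma clamp_le_abs (s : ℝ) : clamp s ≤ |s| :=
  le_trans (min_le_right _ _) (max_le (abs_nonneg s) (le_abs_self s))

lemma continuous_clamp : Continuous clamp :=
  (continuous_const.min (continuous_const.max continuous_id))

def tfun (s : ℝ) : ℝ := (clamp s)^2 * (3 - 2 * clamp s)

def tder (s : ℝ) : ℝ := 6 * clamp s * (1 - clamp s)

lemma tfun_of_nonpos {s : ℝ} (h : s ≤ 0) : tfun s = 0 := by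
  simp [tfun, clamp_of_nonpos h]

lemma tfun_of_one_le {s : ℝ} (h : 1 ≤ s) : tfun s = 1 := by
  norm_num [tfun, clamp_of_one_le h]

lemma tfun_nonneg (s : ℝ) : 0 ≤ tfun s := by
  have h1 := clamp_nonneg s
  have h2 := clamp_le_one s
  unfold tfun
  nlinarith [sq_nonneg (clamp s)]

lemma tfun_le_one (s : ℝ) : tfun s ≤ 1 := by
  have h1 := clamp_nonneg s
  have h2 := clamp_le_one s
  unfold tfun
  nlinarith [sq_nonneg (1 - clamp s), sq_nonneg (clamp s)]

lemma tder_nonneg (s : ℝ) : 0 ≤ tder s := by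
  have h1 := clamp_nonneg s
  have h2 := clamp_le_one s
  unfold tder
  nlinarith

lemma tder_eq_zero_of_nonpos {s : ℝ} (h : s ≤ 0) : tder s = 0 := by
  simp [tder, clamp_of_nonpos h]

lemma tder_eq_zero_of_one_le {s : ℝ} (h : 1 ≤ s) : tder s = 0 := by
  simp [tder, clamp_of_one_le h]

lemma mem_of_tder_ne_zero {s : ℝ} (h : tder s ≠ 0) : 0 < s ∧ s < 1 := by
  constructor
  · by_contra hs
    exact h (tder_eq_zero_of_nonpos (not_lt.1 hs))
  · by_contra hs
    exact h (tder_eq_zero_of_one_le (not_lt.1 hs))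

lemma continuous_tder : Continuous tder := by
  unfold tder
  exact (continuous_const.mul continuous_clamp).mul (continuous_const.sub continuous_clamp)

lemma tfun_abs_le (s : ℝ) : |tfun s| ≤ 3 * |s|^2 := by
  have h0 := clamp_nonneg s
  have h1 := clamp_le_one s
  have h2 := clamp_le_abs s
  rw [abs_of_nonneg (tfun_nonneg s)]
  unfold tfun
  nlinarith [abs_nonneg s]

lemma tfun_sub_one_abs_le (s : ℝ) : |tfun s - 1| ≤ 3 * |s - 1|^2 := by
  have h0 := clamp_nonneg s
  have h1 := clamp_le_one s
  have key : 1 - clamp s ≤ |s - 1| := by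
    rcases le_or_gt 1 s with h | h
    · rw [clamp_of_one_le h]; simp [abs_nonneg]
    · rcases le_or_gt s 0 with h' | h'
      · rw [clamp_of_nonpos h', abs_of_nonpos (by linarith)]; linarith
      · rw [clamp_of_mem h'.le h.le, abs_of_nonpos (by linarith)]; linarith
  have heq : tfun s - 1 = -((1 - clamp s)^2 * (1 + 2 * clamp s)) := by
    unfold tfun; ring
  rw [heq, abs_neg, abs_of_nonneg (by nlinarith)]
  nlinarith [abs_nonneg (s-1), sq_nonneg (1 - clamp s)]

lemma tfun_hasDerivAt (s : ℝ) : HasDerivAt tfun (tder s) s := by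
  rcases lt_trichotomy s 0 with h | rfl | h
  · have : tfun =ᶠ[𝓝 s] (fun _ => 0) := by
      filter_upwards [Iio_mem_nhds h] with y hy
      exact tfun_of_nonpos (le_of_lt hy)
    rw [tder_eq_zero_of_nonpos h.le]
    exact (hasDerivAt_const s (0:ℝ)).congr_of_eventuallyEq this
  · -- s = 0
    rw [hasDerivAt_iff_isLittleO, tder_eq_zero_of_nonpos le_rfl]
    have h1 : (fun y : ℝ => tfun y - tfun 0 - (y - 0) • (0:ℝ)) =O[𝓝 0] (fun y => y * y) := by
      refine IsBigO.of_bound 3 (Eventually.of_forall fun y => ?_)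
      simp only [tfun_of_nonpos le_rfl, smul_zero, sub_zero, Real.norm_eq_abs]
      calc |tfun y| ≤ 3 * |y|^2 := tfun_abs_le y
        _ = 3 * |y * y| := by rw [abs_mul]; ring
    have h2 : (fun y : ℝ => y * y) =o[𝓝 0] (fun y : ℝ => y - 0) := by
      simpa using (isBigO_refl (fun y : ℝ => y) (𝓝 0)).mul_isLittleO
        ((isLittleO_one_iff ℝ).2 (by exact Filter.tendsto_id (α := ℝ)))
    exact h1.trans_isLittleO h2
  · rcases lt_trichotomy s 1 with h1 | rfl | h1
    · have : tfun =ᶠ[𝓝 s] (fun y => y^2 * (3 - 2 * y)) := by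
        filter_upwards [Ioo_mem_nhds h h1] with y hy
        rw [tfun, clamp_of_mem hy.1.le hy.2.le]
      have hd : HasDerivAt (fun y : ℝ => y^2 * (3 - 2 * y)) (tder s) s := by
        have := ((hasDerivAt_pow 2 s).mul
          ((hasDerivAt_const s (3:ℝ)).sub ((hasDerivAt_id s).const_mul 2)))
        refine this.congr_deriv ?_
        rw [tder, clamp_of_mem h.le h1.le]
        simp only [id, Pi.sub_apply]
        ring
      exact hd.congr_of_eventuallyEq this
    · -- s = 1
      rw [hasDerivAt_iff_isLittleO, tder_eq_zero_of_one_le le_rfl]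
      have h1 : (fun y : ℝ => tfun y - tfun 1 - (y - 1) • (0:ℝ)) =O[𝓝 1]
          (fun y => (y - 1) * (y - 1)) := by
        refine IsBigO.of_bound 3 (Eventually.of_forall fun y => ?_)
        simp only [tfun_of_one_le le_rfl, smul_zero, sub_zero, Real.norm_eq_abs]
        calc |tfun y - 1| ≤ 3 * |y - 1|^2 := tfun_sub_one_abs_le y
          _ = 3 * |(y - 1) * (y - 1)| := by rw [abs_mul]; ring
      have h2 : (fun y : ℝ => (y - 1) * (y - 1)) =o[𝓝 1] (fun y : ℝ => y - 1) := by
        have ht : Tendsto (fun y : ℝ => y - 1) (𝓝 1) (𝓝 0) := by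
          have := ((continuous_id (X := ℝ)).sub (continuous_const (y := (1:ℝ)))).tendsto (1:ℝ)
          simpa [Pi.sub_def] using this
        simpa using (isBigO_refl (fun y : ℝ => y - 1) (𝓝 1)).mul_isLittleO
          ((isLittleO_one_iff ℝ).2 ht)
      exact h1.trans_isLittleO h2
    · have : tfun =ᶠ[𝓝 s] (fun _ => 1) := by
        filter_upwards [Ioi_mem_nhds h1] with y hy
        exact tfun_of_one_le (le_of_lt hy)
      rw [tder_eq_zero_of_one_le h1.le]
      exact (hasDerivAt_const s (1:ℝ)).congr_of_eventuallyEq this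


section Polar

variable {n : ℕ}

local notation "E" => EuclideanSpace ℝ (Fin n)
local notation "σ" => Measure.toSphere (volume : Measure (EuclideanSpace ℝ (Fin n)))

lemma nonemptyFin (hn : 0 < n) : Nonempty (Fin n) := ⟨⟨0, hn⟩⟩

lemma nontrivialE (hn : 0 < n) : Nontrivial E := by
  have := nonemptyFin hn
  infer_instance

lemma key_prod_integrable (hn : 0 < n) {h : EuclideanSpace ℝ (Fin n) → ℝ}
    (hi : Integrable h volume) :
    Integrable (fun p : sphere (0:E) 1 × Ioi (0:ℝ) => h ((p.2 : ℝ) • (p.1 : E)))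
      (Measure.prod σ (volumeIoiPow (n-1))) := by
  have := nonemptyFin hn
  have hmp := (volume : Measure E).measurePreserving_homeomorphUnitSphereProd
  rw [finrank_euclideanSpace_fin] at hmp
  set Φ := homeomorphUnitSphereProd E with hΦ
  have hcomp : ((fun p : sphere (0:E) 1 × Ioi (0:ℝ) => h ((p.2 : ℝ) • (p.1 : E))) ∘ Φ)
      = fun x : ({0}ᶜ : Set E) => h x := by
    funext x
    have : ((Φ x).2 : ℝ) • ((Φ x).1 : E) = ((Φ.symm (Φ x) : ({0}ᶜ : Set E)) : E) := by
      rw [homeomorphUnitSphereProd_symm_apply_coe]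
    simp only [Function.comp_apply, this, Homeomorph.symm_apply_apply]
  rw [← hmp.integrable_comp_emb (Φ.measurableEmbedding), hcomp]
  have hval : MeasurePreserving (Subtype.val : ({0}ᶜ : Set E) → E)
      (comap Subtype.val volume) volume := by
    refine ⟨measurable_subtype_coe, ?_⟩
    rw [(MeasurableEmbedding.subtype_coe (measurableSet_singleton (0:E)).compl).map_comap,
      Subtype.range_coe, restrict_compl_singleton]
  exact (hval.integrable_comp_emb
    (MeasurableEmbedding.subtype_coe (measurableSet_singleton (0:E)).compl)).2 hi

lemma inner_volumeIoiPow_integral (m : ℕ) (F : ℝ → ℝ) :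
    ∫ r : Ioi (0:ℝ), F r ∂(volumeIoiPow m) = ∫ r in Ioi (0:ℝ), r ^ m * F r := by
  simp only [Measure.volumeIoiPow, ENNReal.ofReal]
  rw [integral_withDensity_eq_integral_smul
    ((measurable_subtype_coe.pow_const _).real_toNNReal) (fun r : Ioi (0:ℝ) => F r)]
  rw [integral_subtype_comap measurableSet_Ioi (fun a : ℝ => (a ^ m).toNNReal • F a)]
  refine setIntegral_congr_fun measurableSet_Ioi fun r hr => ?_
  rw [NNReal.smul_def, Real.coe_toNNReal _ (pow_nonneg (le_of_lt hr) _), smul_eq_mul]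

lemma polar_eq (hn : 0 < n) {h : EuclideanSpace ℝ (Fin n) → ℝ} (hi : Integrable h volume) :
    ∫ v, h v = ∫ u : sphere (0:E) 1, (∫ r in Ioi (0:ℝ), r ^ (n-1) * h (r • (u : E))) ∂σ := by
  have := nonemptyFin hn
  have hmp := (volume : Measure E).measurePreserving_homeomorphUnitSphereProd
  rw [finrank_euclideanSpace_fin] at hmp
  set Φ := homeomorphUnitSphereProd E with hΦ
  have hcomp : ((fun p : sphere (0:E) 1 × Ioi (0:ℝ) => h ((p.2 : ℝ) • (p.1 : E))) ∘ Φ)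
      = fun x : ({0}ᶜ : Set E) => h x := by
    funext x
    have : ((Φ x).2 : ℝ) • ((Φ x).1 : E) = ((Φ.symm (Φ x) : ({0}ᶜ : Set E)) : E) := by
      rw [homeomorphUnitSphereProd_symm_apply_coe]
    simp only [Function.comp_apply, this, Homeomorph.symm_apply_apply]
  calc ∫ v, h v
      = ∫ x : ({0}ᶜ : Set E), h x ∂(comap Subtype.val volume) := by
        rw [integral_subtype_comap (measurableSet_singleton (0:E)).compl,
          restrict_compl_singleton]
    _ = ∫ p : sphere (0:E) 1 × Ioi (0:ℝ), h ((p.2 : ℝ) • (p.1 : E))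
          ∂(Measure.prod σ (volumeIoiPow (n-1))) := by
        rw [← hmp.integral_comp (Φ.measurableEmbedding)]
        exact integral_congr_ae (Eventually.of_forall fun x => (congrFun hcomp x).symm)
    _ = ∫ u : sphere (0:E) 1, (∫ r : Ioi (0:ℝ), h ((r : ℝ) • (u : E)) ∂(volumeIoiPow (n-1))) ∂σ :=
        integral_prod _ (key_prod_integrable hn hi)
    _ = _ := by
        refine integral_congr_ae (Eventually.of_forall fun u => ?_)
        exact inner_volumeIoiPow_integral (n-1) (fun r => h (r • (u : E)))

lemma polar_integrable (hn : 0 < n) {h : EuclideanSpace ℝ (Fin n) → ℝ} (hi : Integrable h volume) :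
    Integrable (fun u : sphere (0:E) 1 => ∫ r in Ioi (0:ℝ), r ^ (n-1) * h (r • (u : E))) σ := by
  have h1 := (key_prod_integrable hn hi).integral_prod_left
  have : (fun u : sphere (0:E) 1 =>
      ∫ r : Ioi (0:ℝ), h ((r : ℝ) • (u : E)) ∂(volumeIoiPow (n-1)))
      = fun u : sphere (0:E) 1 => ∫ r in Ioi (0:ℝ), r ^ (n-1) * h (r • (u : E)) := by
    funext u
    exact inner_volumeIoiPow_integral (n-1) (fun r => h (r • (u : E)))
  rwa [this] at h1

end Polar


section W

def w (k : ℕ) (r : ℝ) : ℝ := 2 * k * r * tder (k * (r^2 - 1))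

lemma w_cont (k : ℕ) : Continuous (w k) := by
  unfold w
  exact (continuous_const.mul continuous_id).mul
    (continuous_tder.comp (continuous_const.mul ((continuous_id.pow 2).sub continuous_const)))

lemma w_nonneg (k : ℕ) {r : ℝ} (hr : 0 ≤ r) : 0 ≤ w k r := by
  unfold w
  have := tder_nonneg (k * (r^2 - 1))
  positivity

lemma w_hasDerivAt (k : ℕ) (r : ℝ) :
    HasDerivAt (fun r : ℝ => tfun ((k : ℝ) * (r^2 - 1))) (w k r) r := by
  have hinner : HasDerivAt (fun r : ℝ => (k : ℝ) * (r^2 - 1)) ((k : ℝ) * (2 * r)) r := by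
    have := ((hasDerivAt_pow 2 r).sub_const 1).const_mul (k : ℝ)
    simpa using this
  have := (tfun_hasDerivAt ((k : ℝ) * (r^2 - 1))).comp r hinner
  refine this.congr_deriv ?_
  unfold w; ring

lemma w_supp {k : ℕ} (hk : 1 ≤ k) {r : ℝ} (hr : 0 < r) (hw : w k r ≠ 0) :
    1 ≤ r ∧ r ≤ 1 + 1/(k:ℝ) := by
  have hkR : (1:ℝ) ≤ (k:ℝ) := by exact_mod_cast hk
  have htd : tder ((k : ℝ) * (r^2 - 1)) ≠ 0 := by
    intro h; apply hw; unfold w; rw [h]; ring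
  obtain ⟨h1, h2⟩ := mem_of_tder_ne_zero htd
  have hr2 : 1 < r^2 := by nlinarith
  have hr1 : 1 ≤ r := by nlinarith
  constructor
  · exact hr1
  · have : r^2 - 1 < 1/(k:ℝ) := by
      rw [lt_div_iff₀ (by linarith)]; nlinarith
    nlinarith

lemma w_zero_of_two_le {k : ℕ} (hk : 1 ≤ k) {r : ℝ} (hr : 2 ≤ r) : w k r = 0 := by
  have hkR : (1:ℝ) ≤ (k:ℝ) := by exact_mod_cast hk
  unfold w
  have h4 : (4:ℝ) ≤ r^2 := by nlinarith
  have h3 : (3:ℝ) ≤ r^2 - 1 := by linarith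
  have h5 : (1:ℝ) ≤ (k:ℝ) * (r^2 - 1) := by nlinarith
  rw [tder_eq_zero_of_one_le h5, mul_zero]

lemma w_mul_integrableOn {k : ℕ} (hk : 1 ≤ k) {Q : ℝ → ℝ} (hQ : Continuous Q) :
    IntegrableOn (fun r => w k r * Q r) (Ioi (0:ℝ)) := by
  have hsplit : Ioi (0:ℝ) = Ioc (0:ℝ) 2 ∪ Ioi (2:ℝ) := (Ioc_union_Ioi_eq_Ioi (by norm_num)).symm
  rw [hsplit]
  refine IntegrableOn.union ?_ ?_
  · exact ((w_cont k).mul hQ).integrableOn_Ioc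
  · refine (integrableOn_congr_fun (fun r hr => ?_) measurableSet_Ioi).2
      (integrableOn_zero (s := Ioi (2:ℝ)))
    rw [w_zero_of_two_le hk (le_of_lt hr), zero_mul]

lemma w_integrableOn {k : ℕ} (hk : 1 ≤ k) : IntegrableOn (w k) (Ioi (0:ℝ)) := by
  have := w_mul_integrableOn hk (continuous_const (y := (1:ℝ)))
  simpa using this

lemma w_mass {k : ℕ} (hk : 1 ≤ k) : ∫ r in Ioi (0:ℝ), w k r = 1 := by
  have hkR : (1:ℝ) ≤ (k:ℝ) := by exact_mod_cast hk
  have hsplit : Ioi (0:ℝ) = Ioc (0:ℝ) 2 ∪ Ioi (2:ℝ) := (Ioc_union_Ioi_eq_Ioi (by norm_num)).symm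
  have hzero : ∀ r ∈ Ioi (2:ℝ), w k r = 0 := fun r hr => w_zero_of_two_le hk (le_of_lt hr)
  rw [hsplit, setIntegral_union (by rw [Set.disjoint_left]; intro a h1 h2; exact absurd h2 (not_lt.2 h1.2).elim)
    measurableSet_Ioi ((w_cont k).integrableOn_Ioc)
    ((integrableOn_congr_fun hzero measurableSet_Ioi).2 (integrableOn_zero))]
  rw [setIntegral_congr_fun measurableSet_Ioi hzero]
  simp only [integral_zero, add_zero]
  have h1 : ∫ r in Ioc (0:ℝ) 2, w k r = ∫ r in (0:ℝ)..2, w k r := by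
    rw [intervalIntegral.integral_of_le (by norm_num)]
  rw [h1, intervalIntegral.integral_eq_sub_of_hasDerivAt
    (fun x _ => w_hasDerivAt k x) ((w_cont k).intervalIntegrable 0 2)]
  rw [tfun_of_one_le (by nlinarith), tfun_of_nonpos (by nlinarith)]
  norm_num

lemma abs_winteg_sub_le {k : ℕ} (hk : 1 ≤ k) {Q : ℝ → ℝ} (hQ : Continuous Q) {ε : ℝ}
    (hεpos : 0 ≤ ε) (hε : ∀ r ∈ Icc (1:ℝ) (1 + 1/(k:ℝ)), |Q r - Q 1| ≤ ε) :
    |(∫ r in Ioi (0:ℝ), w k r * Q r) - Q 1| ≤ ε := by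
  have hint1 : IntegrableOn (fun r => w k r * Q r) (Ioi (0:ℝ)) := w_mul_integrableOn hk hQ
  have hint2 : IntegrableOn (w k) (Ioi (0:ℝ)) := w_integrableOn hk
  have heq : (∫ r in Ioi (0:ℝ), w k r * Q r) - Q 1
      = ∫ r in Ioi (0:ℝ), w k r * (Q r - Q 1) := by
    have : ∫ r in Ioi (0:ℝ), w k r * (Q r - Q 1)
        = (∫ r in Ioi (0:ℝ), w k r * Q r) - ∫ r in Ioi (0:ℝ), w k r * Q 1 := by
      rw [← integral_sub hint1 (hint2.mul_const _)]
      congr 1; funext r; ring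
    rw [this, MeasureTheory.integral_mul_const, w_mass hk, one_mul]
  rw [heq]
  have hb : |∫ r in Ioi (0:ℝ), w k r * (Q r - Q 1)| ≤ ∫ r in Ioi (0:ℝ), ε * w k r := by
    rw [← Real.norm_eq_abs]
    refine norm_integral_le_of_norm_le ((hint2.const_mul ε)) ?_
    filter_upwards [ae_restrict_mem measurableSet_Ioi] with r hr
    rcases eq_or_ne (w k r) 0 with h0 | h0
    · simp [h0]
    · obtain ⟨ha, hb'⟩ := w_supp hk hr h0
      have := hε r ⟨ha, hb'⟩
      rw [Real.norm_eq_abs, abs_mul, abs_of_nonneg (w_nonneg k (le_of_lt hr))]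
      calc w k r * |Q r - Q 1| ≤ w k r * ε :=
            mul_le_mul_of_nonneg_left this (w_nonneg k (le_of_lt hr))
        _ = ε * w k r := by ring
  calc |∫ r in Ioi (0:ℝ), w k r * (Q r - Q 1)| ≤ ∫ r in Ioi (0:ℝ), ε * w k r := hb
    _ = ε := by rw [MeasureTheory.integral_const_mul, w_mass hk, mul_one]

lemma abs_winteg_le {k : ℕ} (hk : 1 ≤ k) {Q : ℝ → ℝ} (hQ : Continuous Q) {C : ℝ}
    (hC : ∀ r ∈ Icc (1:ℝ) 2, |Q r| ≤ C) :
    |∫ r in Ioi (0:ℝ), w k r * Q r| ≤ C := by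
  have hkR : (1:ℝ) ≤ (k:ℝ) := by exact_mod_cast hk
  have hint2 : IntegrableOn (w k) (Ioi (0:ℝ)) := w_integrableOn hk
  have hb : |∫ r in Ioi (0:ℝ), w k r * Q r| ≤ ∫ r in Ioi (0:ℝ), C * w k r := by
    rw [← Real.norm_eq_abs]
    refine norm_integral_le_of_norm_le ((hint2.const_mul C)) ?_
    filter_upwards [ae_restrict_mem measurableSet_Ioi] with r hr
    rcases eq_or_ne (w k r) 0 with h0 | h0
    · have hC0 : 0 ≤ C := le_trans (abs_nonneg _) (hC 1 (by norm_num))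
      simp [h0]
    · obtain ⟨ha, hb'⟩ := w_supp hk hr h0
      have hr2 : r ≤ 2 := by
        have : 1/(k:ℝ) ≤ 1 := by rw [div_le_one (by linarith)]; linarith
        linarith
      have := hC r ⟨ha, hr2⟩
      rw [Real.norm_eq_abs, abs_mul, abs_of_nonneg (w_nonneg k (le_of_lt hr))]
      calc w k r * |Q r| ≤ w k r * C :=
            mul_le_mul_of_nonneg_left this (w_nonneg k (le_of_lt hr))
        _ = C * w k r := by ring
  calc |∫ r in Ioi (0:ℝ), w k r * Q r| ≤ ∫ r in Ioi (0:ℝ), C * w k r := hb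
    _ = C := by rw [MeasureTheory.integral_const_mul, w_mass hk, mul_one]

lemma w_tendsto {Q : ℝ → ℝ} (hQ : Continuous Q) :
    Tendsto (fun k : ℕ => ∫ r in Ioi (0:ℝ), w k r * Q r) atTop (𝓝 (Q 1)) := by
  rw [Metric.tendsto_atTop]
  intro ε hε
  obtain ⟨δ, hδpos, hδ⟩ := Metric.continuousAt_iff.1 hQ.continuousAt (ε/2) (by linarith)
  obtain ⟨N, hN⟩ := exists_nat_gt (1/δ)
  have hN1 : 1 ≤ max N 1 := le_max_right _ _
  refine ⟨max N 1, fun k hkk => ?_⟩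
  have hk1 : 1 ≤ k := le_trans hN1 hkk
  have hkR : (1:ℝ) ≤ (k:ℝ) := by exact_mod_cast hk1
  have hkN : (N:ℝ) ≤ (k:ℝ) := by exact_mod_cast le_trans (le_max_left N 1) hkk
  rw [Real.dist_eq]
  have key : ∀ r ∈ Icc (1:ℝ) (1 + 1/(k:ℝ)), |Q r - Q 1| ≤ ε/2 := by
    intro r hr
    have h1k : 1/(k:ℝ) < δ := by
      rw [div_lt_iff₀ (by linarith)]
      have h2 : 1/δ < (k:ℝ) := lt_of_lt_of_le hN hkN
      rw [div_lt_iff₀ hδpos] at h2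
      linarith
    have : dist r 1 < δ := by
      rw [Real.dist_eq, abs_of_nonneg (by linarith [hr.1])]
      have := hr.2; linarith
    exact le_of_lt (by simpa [Real.dist_eq] using hδ this)
  exact lt_of_le_of_lt (abs_winteg_sub_le hk1 hQ (by linarith) key) (by linarith)

end W

section Div

variable {n : ℕ}

local notation "E" => EuclideanSpace ℝ (Fin n)
local notation "S" => Metric.sphere (0 : EuclideanSpace ℝ (Fin n)) 1
local notation "σ" => Measure.toSphere (volume : Measure (EuclideanSpace ℝ (Fin n)))

lemma continuous_tfun : Continuous tfun := by
  rw [continuous_iff_continuousAt]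
  exact fun s => (tfun_hasDerivAt s).continuousAt

lemma ck_hasFDerivAt (k : ℕ) (v : E) :
    HasFDerivAt (fun v : E => 1 - tfun ((k:ℝ) * (‖v‖^2 - 1)))
      ((-(2 * (k:ℝ) * tder ((k:ℝ) * (‖v‖^2 - 1)))) • (innerSL ℝ v)) v := by
  have h1 : HasFDerivAt (fun v : E => ‖v‖^2) ((2:ℕ) • (innerSL ℝ v)) v :=
    (hasStrictFDerivAt_norm_sq v).hasFDerivAt
  have h2 : HasFDerivAt (fun v : E => (k:ℝ) * (‖v‖^2 - 1))
      ((k:ℝ) • ((2:ℕ) • (innerSL ℝ v))) v := (h1.sub_const 1).const_mul (k:ℝ)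
  have h3 := ((tfun_hasDerivAt ((k:ℝ) * (‖v‖^2 - 1))).comp_hasFDerivAt v h2).const_sub 1
  refine h3.congr_fderiv ?_
  ext w
  simp only [ContinuousLinearMap.smul_apply, ContinuousLinearMap.neg_apply, smul_eq_mul,
    nsmul_eq_mul, Nat.cast_ofNat, neg_smul]
  ring

theorem integral_ball_fderiv_eq (hn : 0 < n) {g : EuclideanSpace ℝ (Fin n) → ℝ}
    (hg : ContDiff ℝ 1 g) (e : EuclideanSpace ℝ (Fin n)) :
    ∫ v in closedBall (0:E) 1, fderiv ℝ g v e
      = ∫ u : S, g (u : E) * (inner ℝ (u : E) e : ℝ) ∂σ := by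
  classical
  haveI := nonemptyFin hn
  have hgc : Continuous g := hg.continuous
  have hg' : Continuous (fun v : E => fderiv ℝ g v e) :=
    (hg.continuous_fderiv one_ne_zero).clm_apply continuous_const
  obtain ⟨M1, hM1⟩ := (isCompact_closedBall (0:E) 2).exists_bound_of_continuousOn
    hg'.continuousOn
  obtain ⟨M2, hM2⟩ := (isCompact_closedBall (0:E) 2).exists_bound_of_continuousOn
    hgc.continuousOn
  -- the cutoff functions
  set ck : ℕ → E → ℝ := fun k v => 1 - tfun ((k:ℝ) * (‖v‖^2 - 1)) with hck_def
  set cd : ℕ → E → ℝ := fun k v => 2 * (k:ℝ) * tder ((k:ℝ) * (‖v‖^2 - 1)) with hcd_def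
  have hcd_cont : ∀ k, Continuous (cd k) := fun k =>
    continuous_const.mul (continuous_tder.comp
      (continuous_const.mul ((continuous_norm.pow 2).sub continuous_const)))
  have hck_cont : ∀ k, Continuous (ck k) := fun k =>
    continuous_const.sub (continuous_tfun.comp
      (continuous_const.mul ((continuous_norm.pow 2).sub continuous_const)))
  have hckFD : ∀ k (v : E), HasFDerivAt (ck k) ((-(cd k v)) • (innerSL ℝ v)) v :=
    fun k v => ck_hasFDerivAt k v
  have hck0 : ∀ k (v : E), 0 ≤ ck k v := fun k v => by
    simp only [hck_def, sub_nonneg]; exact tfun_le_one _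
  have hck1 : ∀ k (v : E), ck k v ≤ 1 := fun k v => by
    simp only [hck_def]
    have := tfun_nonneg ((k:ℝ) * (‖v‖^2 - 1)); linarith
  have hck_one : ∀ k (v : E), ‖v‖ ≤ 1 → ck k v = 1 := by
    intro k v hv
    have h2 : ‖v‖^2 ≤ 1 := by nlinarith [norm_nonneg v]
    have : (k:ℝ) * (‖v‖^2 - 1) ≤ 0 :=
      mul_nonpos_of_nonneg_of_nonpos (Nat.cast_nonneg k) (by linarith)
    simp [hck_def, tfun_of_nonpos this]
  have hck_zero : ∀ (k : ℕ), 1 ≤ k → ∀ (v : E), 2 ≤ ‖v‖ → ck k v = 0 := by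
    intro k hk v hv
    have hkR : (1:ℝ) ≤ (k:ℝ) := by exact_mod_cast hk
    have h4 : (4:ℝ) ≤ ‖v‖^2 := by nlinarith
    have : (1:ℝ) ≤ (k:ℝ) * (‖v‖^2 - 1) := by nlinarith
    simp [hck_def, tfun_of_one_le this]
  have hcd_zero : ∀ (k : ℕ), 1 ≤ k → ∀ (v : E), 2 ≤ ‖v‖ → cd k v = 0 := by
    intro k hk v hv
    have hkR : (1:ℝ) ≤ (k:ℝ) := by exact_mod_cast hk
    have h4 : (4:ℝ) ≤ ‖v‖^2 := by nlinarith
    have : (1:ℝ) ≤ (k:ℝ) * (‖v‖^2 - 1) := by nlinarith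
    simp [hcd_def, tder_eq_zero_of_one_le this]
  have hnorm_of_notmem : ∀ v : E, v ∉ closedBall (0:E) 2 → 2 ≤ ‖v‖ := by
    intro v hv
    rw [mem_closedBall, dist_zero_right, not_le] at hv
    exact hv.le
  -- the two integral families
  set A : ℕ → ℝ := fun k => ∫ v : E, ck k v * fderiv ℝ g v e with hA_def
  set B : ℕ → ℝ := fun k => ∫ v : E, (cd k v * (inner ℝ v e : ℝ)) * g v with hB_def
  -- integration by parts
  have hAB : ∀ k : ℕ, 1 ≤ k → A k = B k := by
    intro k hk
    have hfd : Differentiable ℝ (ck k) := fun v => (hckFD k v).differentiableAt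
    have hfderiv : ∀ v : E, fderiv ℝ (ck k) v e = -(cd k v * (inner ℝ v e : ℝ)) := by
      intro v
      rw [(hckFD k v).fderiv]
      simp [neg_mul]
    have hsupp : ∀ {F : E → ℝ}, (∀ v : E, 2 ≤ ‖v‖ → F v = 0) → HasCompactSupport F := by
      intro F hF
      exact HasCompactSupport.intro (isCompact_closedBall (0:E) 2)
        (fun v hv => hF v (hnorm_of_notmem v hv))
    have i1 : Integrable (fun v : E => fderiv ℝ (ck k) v e * g v) volume := by
      have hcont : Continuous (fun v : E => fderiv ℝ (ck k) v e * g v) := by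
        have : (fun v : E => fderiv ℝ (ck k) v e * g v)
            = fun v : E => (-(cd k v * (inner ℝ v e : ℝ))) * g v := by
          funext v; rw [hfderiv v]
        rw [this]
        exact ((((hcd_cont k).mul (continuous_id.inner continuous_const))).neg).mul hgc
      refine hcont.integrable_of_hasCompactSupport (hsupp ?_)
      intro v hv
      rw [hfderiv v, hcd_zero k hk v hv]
      ring
    have i2 : Integrable (fun v : E => ck k v * fderiv ℝ g v e) volume := by
      refine ((hck_cont k).mul hg').integrable_of_hasCompactSupport (hsupp ?_)
      intro v hv
      rw [Pi.mul_apply, hck_zero k hk v hv, zero_mul]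
    have i3 : Integrable (fun v : E => ck k v * g v) volume := by
      refine ((hck_cont k).mul hgc).integrable_of_hasCompactSupport (hsupp ?_)
      intro v hv
      rw [Pi.mul_apply, hck_zero k hk v hv, zero_mul]
    have := integral_mul_fderiv_eq_neg_fderiv_mul_of_integrable i1 i2 i3 (fun x _ => hfd x)
      (fun x _ => hg.differentiable one_ne_zero x)
    rw [hA_def, hB_def]
    simp only []
    rw [this, ← integral_neg]
    congr 1
    funext v
    rw [hfderiv v]
    ring
  -- limit of A
  have hAlim : Tendsto A atTop (𝓝 (∫ v in closedBall (0:E) 1, fderiv ℝ g v e)) := by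
    rw [← integral_indicator (measurableSet_closedBall)]
    refine tendsto_integral_filter_of_dominated_convergence
      ((closedBall (0:E) 2).indicator (fun _ => max M1 0)) ?_ ?_ ?_ ?_
    · exact Eventually.of_forall fun k =>
        (((hck_cont k).mul hg')).aestronglyMeasurable
    · filter_upwards [eventually_ge_atTop 1] with k hk
      refine Eventually.of_forall fun v => ?_
      by_cases hv : v ∈ closedBall (0:E) 2
      · rw [indicator_of_mem hv, Real.norm_eq_abs, abs_mul,
          abs_of_nonneg (hck0 k v)]
        calc ck k v * |fderiv ℝ g v e| ≤ 1 * |fderiv ℝ g v e| :=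
              mul_le_mul_of_nonneg_right (hck1 k v) (abs_nonneg _)
          _ = |fderiv ℝ g v e| := one_mul _
          _ ≤ M1 := by rw [← Real.norm_eq_abs]; exact hM1 v hv
          _ ≤ max M1 0 := le_max_left _ _
      · rw [indicator_of_notMem hv, hck_zero k hk v (hnorm_of_notmem v hv), zero_mul]
        simp
    · exact (integrableOn_const measure_closedBall_lt_top.ne).integrable_indicator
        measurableSet_closedBall
    · refine Eventually.of_forall fun v => ?_
      by_cases hv : ‖v‖ ≤ 1
      · have hmem : v ∈ closedBall (0:E) 1 := by
          rw [mem_closedBall, dist_zero_right]; exact hv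
        rw [indicator_of_mem hmem]
        have : ∀ k : ℕ, ck k v * fderiv ℝ g v e = fderiv ℝ g v e := by
          intro k; rw [hck_one k v hv, one_mul]
        simpa [this] using tendsto_const_nhds
      · push_neg at hv
        have hmem : v ∉ closedBall (0:E) 1 := by
          rw [mem_closedBall, dist_zero_right]; exact not_le.2 hv
        rw [indicator_of_notMem hmem]
        have hpos : 0 < ‖v‖^2 - 1 := by nlinarith
        obtain ⟨N, hN⟩ := exists_nat_ge (1/(‖v‖^2 - 1))
        refine Tendsto.congr' ?_ (tendsto_const_nhds (x := (0:ℝ)))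
        filter_upwards [eventually_ge_atTop N] with k hkN
        have hkR : (1/(‖v‖^2-1)) ≤ (k:ℝ) := le_trans hN (by exact_mod_cast hkN)
        have h1 : (1:ℝ) ≤ (k:ℝ) * (‖v‖^2 - 1) := by
          rw [div_le_iff₀ hpos] at hkR; linarith
        have : ck k v = 0 := by simp [hck_def, tfun_of_one_le h1]
        rw [this, zero_mul]
  -- limit of B
  have hBlim : Tendsto B atTop (𝓝 (∫ u : S, g (u:E) * (inner ℝ (u:E) e : ℝ) ∂σ)) := by
    -- rewrite B via polar coordinates, for k ≥ 1
    set q : ℕ → S → ℝ := fun k u =>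
      ∫ r in Ioi (0:ℝ), w k r * (r^(n-1) * (g (r • (u:E)) * (inner ℝ (u:E) e : ℝ))) with hq_def
    have hHk_int : ∀ k : ℕ, 1 ≤ k →
        Integrable (fun v : E => (cd k v * (inner ℝ v e : ℝ)) * g v) volume := by
      intro k hk
      refine ((((hcd_cont k).mul (continuous_id.inner continuous_const))).mul
        hgc).integrable_of_hasCompactSupport ?_
      refine HasCompactSupport.intro (isCompact_closedBall (0:E) 2) fun v hv => ?_
      rw [Pi.mul_apply, Pi.mul_apply, hcd_zero k hk v (hnorm_of_notmem v hv)]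
      ring
    have hq_eq : ∀ k : ℕ, ∀ u : S,
        (∫ r in Ioi (0:ℝ), r^(n-1) * ((cd k (r • (u:E)) * (inner ℝ (r • (u:E)) e : ℝ)) * g (r • (u:E))))
          = q k u := by
      intro k u
      refine setIntegral_congr_fun measurableSet_Ioi fun r hr => ?_
      have hu : ‖(u:E)‖ = 1 := mem_sphere_zero_iff_norm.1 u.2
      have hnr : ‖r • (u:E)‖^2 = r^2 := by
        rw [norm_smul, hu, mul_one, Real.norm_eq_abs, sq_abs]
      have hinner : (inner ℝ (r • (u:E)) e : ℝ) = r * (inner ℝ (u:E) e : ℝ) := real_inner_smul_left _ _ _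
      simp only [hcd_def, hnr, hinner, w]
      ring
    have hB_eq : ∀ k : ℕ, 1 ≤ k → B k = ∫ u : S, q k u ∂σ := by
      intro k hk
      rw [hB_def]
      simp only []
      rw [polar_eq hn (hHk_int k hk)]
      exact integral_congr_ae (Eventually.of_forall fun u => hq_eq k u)
    have hq_meas : ∀ k : ℕ, 1 ≤ k → AEStronglyMeasurable (q k) σ := by
      intro k hk
      have h1 := polar_integrable hn (hHk_int k hk)
      have : (fun u : S => ∫ r in Ioi (0:ℝ),
          r^(n-1) * ((cd k (r • (u:E)) * (inner ℝ (r • (u:E)) e : ℝ)) * g (r • (u:E)))) = q k := by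
        funext u; exact hq_eq k u
      rw [this] at h1
      exact h1.aestronglyMeasurable
    have hQcont : ∀ u : S, Continuous (fun r : ℝ => r^(n-1) * (g (r • (u:E)) * (inner ℝ (u:E) e : ℝ))) := by
      intro u
      exact (continuous_pow _).mul
        ((hgc.comp (continuous_id.smul continuous_const)).mul continuous_const)
    have hQbound : ∀ u : S, ∀ r ∈ Icc (1:ℝ) 2,
        |r^(n-1) * (g (r • (u:E)) * (inner ℝ (u:E) e : ℝ))| ≤ 2^(n-1) * (max M2 0) * ‖e‖ := by
      intro u r hr
      have hu : ‖(u:E)‖ = 1 := mem_sphere_zero_iff_norm.1 u.2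
      have hmem : r • (u:E) ∈ closedBall (0:E) 2 := by
        rw [mem_closedBall, dist_zero_right, norm_smul, hu, mul_one, Real.norm_eq_abs,
          abs_of_nonneg (by linarith [hr.1])]
        exact hr.2
      have h1 : |r^(n-1)| ≤ 2^(n-1) := by
        rw [abs_of_nonneg (pow_nonneg (by linarith [hr.1]) _)]
        exact pow_le_pow_left₀ (by linarith [hr.1]) hr.2 _
      have h2 : |g (r • (u:E))| ≤ max M2 0 := by
        rw [← Real.norm_eq_abs]
        exact le_trans (hM2 _ hmem) (le_max_left _ _)
      have h3 : |(inner ℝ (u:E) e : ℝ)| ≤ ‖e‖ := by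
        calc |(inner ℝ (u:E) e : ℝ)| ≤ ‖(u:E)‖ * ‖e‖ := abs_real_inner_le_norm _ _
          _ = ‖e‖ := by rw [hu, one_mul]
      calc |r^(n-1) * (g (r • (u:E)) * (inner ℝ (u:E) e : ℝ))|
          = |r^(n-1)| * (|g (r • (u:E))| * |(inner ℝ (u:E) e : ℝ)|) := by
            rw [abs_mul, abs_mul]
        _ ≤ 2^(n-1) * ((max M2 0) * ‖e‖) := by
            refine mul_le_mul h1 ?_ (by positivity) (by positivity)
            exact mul_le_mul h2 h3 (abs_nonneg _) (le_max_right _ _)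
        _ = 2^(n-1) * (max M2 0) * ‖e‖ := by ring
    have hqlim : Tendsto (fun k => ∫ u : S, q k u ∂σ) atTop
        (𝓝 (∫ u : S, g (u:E) * (inner ℝ (u:E) e : ℝ) ∂σ)) := by
      refine tendsto_integral_filter_of_dominated_convergence
        (fun _ => 2^(n-1) * (max M2 0) * ‖e‖) ?_ ?_ ?_ ?_
      · filter_upwards [eventually_ge_atTop 1] with k hk
        exact hq_meas k hk
      · filter_upwards [eventually_ge_atTop 1] with k hk
        refine Eventually.of_forall fun u => ?_
        rw [Real.norm_eq_abs]
        exact abs_winteg_le hk (hQcont u) (hQbound u)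
      · exact integrable_const _
      · refine Eventually.of_forall fun u => ?_
        have := w_tendsto (hQcont u)
        simpa using this
    refine Tendsto.congr' ?_ hqlim
    filter_upwards [eventually_ge_atTop 1] with k hk
    exact (hB_eq k hk).symm
  have hABev : A =ᶠ[atTop] B := by
    filter_upwards [eventually_ge_atTop 1] with k hk
    exact hAB k hk
  exact tendsto_nhds_unique (hAlim.congr' hABev) hBlim

end Div


section Main

variable {n : ℕ}

local notation "E" => EuclideanSpace ℝ (Fin n)
local notation "S" => Metric.sphere (0 : EuclideanSpace ℝ (Fin n)) 1
local notation "σ" => Measure.toSphere (volume : Measure (EuclideanSpace ℝ (Fin n)))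

lemma volume_closedBall_eq_ball (hn : 0 < n) :
    volume (closedBall (0:E) 1) = volume (ball (0:E) 1) := by
  haveI := nonemptyFin hn
  haveI : Nontrivial E := nontrivialE hn
  rw [← ball_union_sphere, measure_union' ?_ measurableSet_ball]
  · rw [Measure.addHaar_sphere volume (0:E) 1, add_zero]
  · exact Set.disjoint_left.2 fun v hv1 hv2 => by
      rw [mem_ball, dist_zero_right] at hv1
      rw [mem_sphere, dist_zero_right] at hv2
      rw [hv2] at hv1
      exact lt_irrefl _ hv1

lemma main_step (hn : 0 < n) (f : EuclideanSpace ℝ (Fin n) → ℝ) (hf : ContDiff ℝ 1 f)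
    (δ : ℝ) (hδ : 0 < δ) (x : EuclideanSpace ℝ (Fin n)) :
    HasFDerivAt (fun y : E => ∫ v in closedBall (0:E) 1, f (y + δ • v))
      (∫ v in closedBall (0:E) 1, fderiv ℝ f (x + δ • v)) x := by
  haveI := nonemptyFin hn
  obtain ⟨M, hM⟩ := (isCompact_closedBall x (1 + δ)).exists_bound_of_continuousOn
    (hf.continuous_fderiv one_ne_zero).continuousOn
  have hmemK : ∀ y ∈ ball x 1, ∀ v ∈ closedBall (0:E) 1, y + δ • v ∈ closedBall x (1 + δ) := by
    intro y hy v hv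
    rw [mem_closedBall]
    rw [mem_ball] at hy
    rw [mem_closedBall, dist_zero_right] at hv
    calc dist (y + δ • v) x ≤ dist (y + δ • v) y + dist y x := dist_triangle _ _ _
      _ = ‖δ • v‖ + dist y x := by rw [dist_eq_norm, add_sub_cancel_left]
      _ ≤ δ * 1 + 1 := by
          refine add_le_add ?_ hy.le
          rw [norm_smul, Real.norm_eq_abs, abs_of_pos hδ]
          exact mul_le_mul_of_nonneg_left hv hδ.le
      _ = 1 + δ := by ring
  refine hasFDerivAt_integral_of_dominated_of_fderiv_le (𝕜 := ℝ)
    (F' := fun y v => fderiv ℝ f (y + δ • v)) (bound := fun _ => M) (ball_mem_nhds x one_pos) ?_ ?_ ?_ ?_ ?_ ?_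
  · exact Eventually.of_forall fun y =>
      (hf.continuous.comp (continuous_const.add (continuous_const_smul δ))
        : Continuous fun v : E => f (y + δ • v)).aestronglyMeasurable
  · exact ((hf.continuous.comp
      (continuous_const.add (continuous_const_smul δ)) : Continuous fun v : E => f (x + δ • v)).continuousOn).integrableOn_compact
        (isCompact_closedBall _ _)
  · exact (((hf.continuous_fderiv one_ne_zero).comp
      (continuous_const.add (continuous_const_smul δ))) : Continuous fun v : E => fderiv ℝ f (x + δ • v)).aestronglyMeasurable
  · filter_upwards [ae_restrict_mem measurableSet_closedBall] with v hv
    intro y hy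
    exact hM _ (hmemK y hy v hv)
  · exact integrableOn_const measure_closedBall_lt_top.ne
  · filter_upwards [ae_restrict_mem measurableSet_closedBall] with v _
    intro y _
    have h1 : HasFDerivAt (fun z : E => z + δ • v) (ContinuousLinearMap.id ℝ _) y := by
      simpa using (hasFDerivAt_id y).add_const (δ • v)
    have h2 := (hf.differentiable one_ne_zero (y + δ • v)).hasFDerivAt
    simpa [Function.comp_def] using h2.comp y h1

end Main

end Aux14

open Aux14 in
theorem stmt_14 (n : ℕ) (hn : 0 < n)
    (f : EuclideanSpace ℝ (Fin n) → ℝ) (hf : ContDiff ℝ 1 f)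
    (δ : ℝ) (hδ : 0 < δ)
    (fhat : EuclideanSpace ℝ (Fin n) → ℝ)
    (hfhat : ∀ x, fhat x =
      (volume (Metric.closedBall (0 : EuclideanSpace ℝ (Fin n)) 1)).toReal⁻¹ *
        ∫ v in Metric.closedBall (0 : EuclideanSpace ℝ (Fin n)) 1, f (x + δ • v))
    (x : EuclideanSpace ℝ (Fin n)) :
    HasGradientAt fhat
      ((((volume : Measure (EuclideanSpace ℝ (Fin n))).toSphere Set.univ).toReal⁻¹ : ℝ) •
        ∫ u : Metric.sphere (0 : EuclideanSpace ℝ (Fin n)) 1,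
          (((n : ℝ) / δ) * f (x + δ • (u : EuclideanSpace ℝ (Fin n)))) •
            (u : EuclideanSpace ℝ (Fin n))
          ∂((volume : Measure (EuclideanSpace ℝ (Fin n))).toSphere)) x := by
  classical
  haveI := Aux14.nonemptyFin hn
  haveI : Nontrivial (EuclideanSpace ℝ (Fin n)) := nontrivialE hn
  have hfhat_eq : fhat = fun y =>
      (volume (Metric.closedBall (0 : EuclideanSpace ℝ (Fin n)) 1)).toReal⁻¹ *
        ∫ v in Metric.closedBall (0 : EuclideanSpace ℝ (Fin n)) 1, f (y + δ • v) :=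
    funext hfhat
  set cB : ℝ := (volume (Metric.closedBall (0 : EuclideanSpace ℝ (Fin n)) 1)).toReal⁻¹
    with hcB_def
  have hmain : HasFDerivAt (fun y : EuclideanSpace ℝ (Fin n) =>
      cB * ∫ v in Metric.closedBall (0 : EuclideanSpace ℝ (Fin n)) 1, f (y + δ • v))
      (cB • (∫ v in Metric.closedBall (0 : EuclideanSpace ℝ (Fin n)) 1,
        fderiv ℝ f (x + δ • v))) x :=
    (main_step hn f hf δ hδ x).const_mul cB
  rw [hasGradientAt_iff_hasFDerivAt, hfhat_eq]
  have hvolB_pos : 0 < (volume (Metric.closedBall (0 : EuclideanSpace ℝ (Fin n)) 1)).toReal :=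
    ENNReal.toReal_pos (measure_closedBall_pos volume _ one_pos).ne'
      measure_closedBall_lt_top.ne
  have hσU : (((volume : Measure (EuclideanSpace ℝ (Fin n))).toSphere Set.univ)).toReal
      = n * (volume (Metric.closedBall (0 : EuclideanSpace ℝ (Fin n)) 1)).toReal := by
    rw [Measure.toSphere_apply_univ, volume_closedBall_eq_ball hn,
      ENNReal.toReal_mul, finrank_euclideanSpace_fin]
    simp
  have hsph_cont : Continuous (fun u : Metric.sphere (0 : EuclideanSpace ℝ (Fin n)) 1 =>
      (((n : ℝ) / δ) * f (x + δ • (u : EuclideanSpace ℝ (Fin n)))) •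
        (u : EuclideanSpace ℝ (Fin n))) :=
    by have := hf.continuous; fun_prop
  have hsph_int : Integrable (fun u : Metric.sphere (0 : EuclideanSpace ℝ (Fin n)) 1 =>
      (((n : ℝ) / δ) * f (x + δ • (u : EuclideanSpace ℝ (Fin n)))) •
        (u : EuclideanSpace ℝ (Fin n)))
      ((volume : Measure (EuclideanSpace ℝ (Fin n))).toSphere) :=
    hsph_cont.integrable_of_hasCompactSupport (HasCompactSupport.of_compactSpace _)
  have hΦint : Integrable (fun v : EuclideanSpace ℝ (Fin n) => fderiv ℝ f (x + δ • v))
      (volume.restrict (Metric.closedBall (0 : EuclideanSpace ℝ (Fin n)) 1)) :=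
    (((hf.continuous_fderiv one_ne_zero).comp
      (continuous_const.add (continuous_const_smul δ)) : Continuous fun v : EuclideanSpace ℝ (Fin n) => fderiv ℝ f (x + δ • v)).continuousOn).integrableOn_compact
        (isCompact_closedBall _ _)
  have hg : ContDiff ℝ 1 (fun v : EuclideanSpace ℝ (Fin n) => f (x + δ • v)) :=
    hf.comp (contDiff_const.add (contDiff_id.const_smul δ))
  have hgder : ∀ (v e : EuclideanSpace ℝ (Fin n)),
      fderiv ℝ (fun v : EuclideanSpace ℝ (Fin n) => f (x + δ • v)) v e
        = δ * fderiv ℝ f (x + δ • v) e := by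
    intro v e
    have haff : HasFDerivAt (fun v : EuclideanSpace ℝ (Fin n) => x + δ • v)
        (δ • ContinuousLinearMap.id ℝ (EuclideanSpace ℝ (Fin n))) v :=
      ((hasFDerivAt_id v).const_smul δ).const_add x
    have hcomp : HasFDerivAt (fun v : EuclideanSpace ℝ (Fin n) => f (x + δ • v))
        ((fderiv ℝ f (x + δ • v)).comp
          (δ • ContinuousLinearMap.id ℝ (EuclideanSpace ℝ (Fin n)))) v :=
      ((hf.differentiable one_ne_zero (x + δ • v)).hasFDerivAt).comp v haff
    rw [hcomp.fderiv]
    simp only [ContinuousLinearMap.coe_comp', Function.comp_apply,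
      ContinuousLinearMap.smul_apply, ContinuousLinearMap.id_apply,
      (fderiv ℝ f (x + δ • v)).map_smul, smul_eq_mul]
  have hkey : (InnerProductSpace.toDual ℝ (EuclideanSpace ℝ (Fin n)))
      ((((volume : Measure (EuclideanSpace ℝ (Fin n))).toSphere Set.univ).toReal⁻¹ : ℝ) •
        ∫ u : Metric.sphere (0 : EuclideanSpace ℝ (Fin n)) 1,
          (((n : ℝ) / δ) * f (x + δ • (u : EuclideanSpace ℝ (Fin n)))) •
            (u : EuclideanSpace ℝ (Fin n))
          ∂((volume : Measure (EuclideanSpace ℝ (Fin n))).toSphere))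
      = cB • (∫ v in Metric.closedBall (0 : EuclideanSpace ℝ (Fin n)) 1,
          fderiv ℝ f (x + δ • v)) := by
    refine ContinuousLinearMap.ext fun e => ?_
    rw [InnerProductSpace.toDual_apply_apply]
    have hLHS : (inner ℝ ((((volume : Measure (EuclideanSpace ℝ (Fin n))).toSphere Set.univ).toReal⁻¹ : ℝ) •
        ∫ u : Metric.sphere (0 : EuclideanSpace ℝ (Fin n)) 1,
          (((n : ℝ) / δ) * f (x + δ • (u : EuclideanSpace ℝ (Fin n)))) •
            (u : EuclideanSpace ℝ (Fin n))
          ∂((volume : Measure (EuclideanSpace ℝ (Fin n))).toSphere)) e : ℝ)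
        = (((volume : Measure (EuclideanSpace ℝ (Fin n))).toSphere Set.univ).toReal⁻¹ : ℝ) *
          (((n : ℝ) / δ) * ∫ u : Metric.sphere (0 : EuclideanSpace ℝ (Fin n)) 1,
            f (x + δ • (u : EuclideanSpace ℝ (Fin n))) * (inner ℝ (u : EuclideanSpace ℝ (Fin n)) e : ℝ)
            ∂((volume : Measure (EuclideanSpace ℝ (Fin n))).toSphere)) := by
      rw [real_inner_smul_left]
      congr 1
      rw [real_inner_comm, ← integral_inner hsph_int e, ← MeasureTheory.integral_const_mul]
      refine integral_congr_ae (Eventually.of_forall fun u => ?_)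
      have : (inner ℝ e ((((n:ℝ)/δ) * f (x + δ • (u : EuclideanSpace ℝ (Fin n)))) •
          (u : EuclideanSpace ℝ (Fin n))) : ℝ)
          = ((n:ℝ)/δ) * (f (x + δ • (u : EuclideanSpace ℝ (Fin n))) *
            (inner ℝ (u : EuclideanSpace ℝ (Fin n)) e : ℝ)) := by
        rw [real_inner_smul_right, real_inner_comm]; ring
      simpa using this
    have h2 := integral_ball_fderiv_eq hn hg e
    have h1 : ∫ v in Metric.closedBall (0 : EuclideanSpace ℝ (Fin n)) 1,
        fderiv ℝ (fun v : EuclideanSpace ℝ (Fin n) => f (x + δ • v)) v e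
        = δ * ∫ v in Metric.closedBall (0 : EuclideanSpace ℝ (Fin n)) 1,
            fderiv ℝ f (x + δ • v) e := by
      rw [← MeasureTheory.integral_const_mul]
      exact integral_congr_ae (Eventually.of_forall fun v => hgder v e)
    have hRHS : (cB • (∫ v in Metric.closedBall (0 : EuclideanSpace ℝ (Fin n)) 1,
        fderiv ℝ f (x + δ • v))) e
        = cB * (δ⁻¹ * ∫ u : Metric.sphere (0 : EuclideanSpace ℝ (Fin n)) 1,
            f (x + δ • (u : EuclideanSpace ℝ (Fin n))) * (inner ℝ (u : EuclideanSpace ℝ (Fin n)) e : ℝ)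
            ∂((volume : Measure (EuclideanSpace ℝ (Fin n))).toSphere)) := by
      rw [ContinuousLinearMap.smul_apply, smul_eq_mul]
      congr 1
      rw [ContinuousLinearMap.integral_apply hΦint]
      have h3 : ∫ v in Metric.closedBall (0 : EuclideanSpace ℝ (Fin n)) 1,
          fderiv ℝ f (x + δ • v) e
          = δ⁻¹ * ∫ v in Metric.closedBall (0 : EuclideanSpace ℝ (Fin n)) 1,
              fderiv ℝ (fun v : EuclideanSpace ℝ (Fin n) => f (x + δ • v)) v e := by
        rw [h1, ← mul_assoc, inv_mul_cancel₀ hδ.ne', one_mul]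
      rw [h3, h2]
    rw [hLHS, hRHS, hσU, hcB_def]
    have hn' : (0:ℝ) < n := by exact_mod_cast hn
    field_simp
  rw [hkey]
  exact hmain
end
end
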